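/- Let L_n ⊆ S_n be a zigzag language and let π, ρ, σ be three consecutive permutations in J(L_n). If ρ is obtained from π by a jump of the value n and σ is obtained from ρ by a jump of a value j < n, then s_{n,i}^ρ = s_{n,i}^π for all i ∈ {1,…,n−2} and s_{n,n−1}^ρ = n−1. -/

import Mathlib

/-!
Shared definitions: permutations in one-line notation as lists of naturals,
deletion `p`, insertion `c_i`, zigzag languages, the Gray code sequence `J(L_n)`,
jumps, minimal jumps, the auxiliary sequences `s_n^π`, Algorithm M,
vincular pattern containment and 2-clumped permutations.
-/

/-- `S_n`: permutations of `{1,…,n}` in one-line notation, as lists of naturals. -/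
def SymmList (n : ℕ) : Set (List ℕ) := {l | List.Perm l (List.range' 1 n)}

/-- The identity permutation `id_n = 1 2 ⋯ n`. -/
def idPerm (n : ℕ) : List ℕ := List.range' 1 n

/-- `p(π)`: delete the largest entry `n = π.length` from the permutation `π ∈ S_n`. -/
def pdel (l : List ℕ) : List ℕ := l.erase l.length

/-- `c_i(π)`: insert the new largest value `π.length + 1` at (1-indexed) position `i`. -/
def cins (i : ℕ) (l : List ℕ) : List ℕ :=
  l.take (i - 1) ++ (l.length + 1) :: l.drop (i - 1)

/-- Zigzag languages of permutations: `L_0 = {ε}` is a zigzag language, and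
`L ⊆ S_{n+1}` is a zigzag language if `p(L)` is a zigzag language and
`c_1(π), c_{n+1}(π) ∈ L` for every `π ∈ p(L)`. -/
inductive IsZigzag : ℕ → Set (List ℕ) → Prop
  | zero : IsZigzag 0 {[]}
  | succ (n : ℕ) (L : Set (List ℕ)) :
      L ⊆ SymmList (n + 1) →
      IsZigzag n (pdel '' L) →
      (∀ l ∈ pdel '' L, cins 1 l ∈ L ∧ cins (n + 1) l ∈ L) →
      IsZigzag (n + 1) L

/-- `→c(π)`: the sequence of those `c_1(π),…,c_n(π)` lying in `L`,
in increasing order of the insertion position. -/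
noncomputable def cSeq (L : Set (List ℕ)) (n : ℕ) (l : List ℕ) : List (List ℕ) :=
  ((List.range' 1 n).map (fun i => cins i l)).filter
    (fun x => @decide (x ∈ L) (Classical.propDecidable _))

/-- The Gray code sequence `J(L_n)` of a language `L ⊆ S_n`:
`J(L_0) = ε`, and `J(L_{n+1})` is obtained from `J(L_n)` (for the language
`p(L)`) by replacing its entries alternately by `←c(π)` (the reverse of
`→c(π)`) and `→c(π)`. -/
noncomputable def Jseq : ℕ → Set (List ℕ) → List (List ℕ)
  | 0, _ => [[]]
  | (n + 1), L =>
      (((Jseq n (pdel '' L)).mapIdx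
        (fun k π => if k % 2 = 0 then (cSeq L (n + 1) π).reverse
                    else cSeq L (n + 1) π)).flatten)

/-- `ρ` is obtained from `π` by a right jump of the value `v` by `d` steps. -/
def RightJump (π ρ : List ℕ) (v d : ℕ) : Prop :=
  0 < d ∧ ∃ A B C : List ℕ, B.length = d ∧ (∀ x ∈ B, x < v) ∧
    π = A ++ v :: (B ++ C) ∧ ρ = A ++ (B ++ v :: C)

/-- `ρ` is obtained from `π` by a left jump of the value `v` by `d` steps. -/
def LeftJump (π ρ : List ℕ) (v d : ℕ) : Prop := RightJump ρ π v d

/-- A right jump that is minimal with respect to `L`: every right jump of the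
same value by fewer steps yields a permutation not in `L`. -/
def MinimalRightJump (L : Set (List ℕ)) (π ρ : List ℕ) (v d : ℕ) : Prop :=
  RightJump π ρ v d ∧ ∀ d' ρ', d' < d → RightJump π ρ' v d' → ρ' ∉ L

/-- A left jump that is minimal with respect to `L`. -/
def MinimalLeftJump (L : Set (List ℕ)) (π ρ : List ℕ) (v d : ℕ) : Prop :=
  LeftJump π ρ v d ∧ ∀ d' ρ', d' < d → LeftJump π ρ' v d' → ρ' ∉ L

/-- The auxiliary sequence `s_n^π` of a permutation `π` occurring in `J(L_n)`,
as a function of the index `i ∈ {1,…,n}` (value `0` outside this range). -/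
noncomputable def sVec : ℕ → Set (List ℕ) → List ℕ → ℕ → ℕ
  | 0, _, _, _ => 0
  | 1, _, _, i => if i = 1 then 1 else 0
  | (n + 2), L, π, i =>
      let L' := pdel '' L
      let π' := pdel π
      let cbar := if ((Jseq (n + 1) L').idxOf π') % 2 = 0
                  then (cSeq L (n + 2) π').reverse else cSeq L (n + 2) π'
      if cbar.getLast? = some π then
        (if i ≤ n then sVec (n + 1) L' π' i
         else if i = n + 1 then n + 1
         else if i = n + 2 then sVec (n + 1) L' π' (n + 1) else 0)
      else
        (if i ≤ n + 1 then sVec (n + 1) L' π' i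
         else if i = n + 2 then n + 2 else 0)

/-- `j` is at the first position of `l`, or the entry immediately left of `j`
in `l` is larger than `j`. -/
def AtLeftTurn (l : List ℕ) (j : ℕ) : Prop :=
  ∃ A B : List ℕ, l = A ++ j :: B ∧ (A = [] ∨ ∃ x, A.getLast? = some x ∧ j < x)

/-- `j` is at the last position of `l`, or the entry immediately right of `j`
in `l` is larger than `j`. -/
def AtRightTurn (l : List ℕ) (j : ℕ) : Prop :=
  ∃ A B : List ℕ, l = A ++ j :: B ∧ (B = [] ∨ ∃ x, B.head? = some x ∧ j < x)

/-- `j` is not at the first position of `l`, and the entry immediately left of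
`j` in `l` is smaller than `j`. -/
def SmallerLeftNeighbor (l : List ℕ) (j : ℕ) : Prop :=
  ∃ A B : List ℕ, ∃ x, l = A ++ j :: B ∧ A.getLast? = some x ∧ x < j

/-- `j` is not at the last position of `l`, and the entry immediately right of
`j` in `l` is smaller than `j`. -/
def SmallerRightNeighbor (l : List ℕ) (j : ℕ) : Prop :=
  ∃ A B : List ℕ, ∃ x, l = A ++ j :: B ∧ B.head? = some x ∧ x < j

/-- A state of Algorithm M: the current permutation `π` and the auxiliary
arrays `o` and `s`; `o j = false` encodes direction `L` (left) and
`o j = true` encodes `R` (right). -/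
structure MState where
  perm : List ℕ
  o : ℕ → Bool
  s : ℕ → ℕ

/-- The initial state of Algorithm M (step M1): `π = id_n`, `o_j = L`, `s_j = j`. -/
def MInit (n : ℕ) : MState := ⟨idPerm n, fun _ => false, fun j => j⟩

/-- One iteration (steps M3–M5) of Algorithm M on a language `L ⊆ S_n`:
with `j := s_n ≠ 1`, the permutation jumps minimally in the direction `o_j`
(step M4), and the arrays `o`, `s` are updated as in step M5. -/
def MStep (L : Set (List ℕ)) (n : ℕ) (σ σ' : MState) : Prop :=
  σ.s n ≠ 1 ∧
  σ'.perm ∈ L ∧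
  ((σ.o (σ.s n) = false ∧ ∃ d, MinimalLeftJump L σ.perm σ'.perm (σ.s n) d) ∨
   (σ.o (σ.s n) = true ∧ ∃ d, MinimalRightJump L σ.perm σ'.perm (σ.s n) d)) ∧
  (((σ.o (σ.s n) = false ∧ AtLeftTurn σ'.perm (σ.s n)) ∨
    (σ.o (σ.s n) = true ∧ AtRightTurn σ'.perm (σ.s n))) →
      σ'.o = Function.update σ.o (σ.s n) (!σ.o (σ.s n)) ∧
      σ'.s = Function.update (Function.update (Function.update σ.s n n) (σ.s n)
               ((Function.update σ.s n n) (σ.s n - 1))) (σ.s n - 1) (σ.s n - 1)) ∧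
  (¬ ((σ.o (σ.s n) = false ∧ AtLeftTurn σ'.perm (σ.s n)) ∨
      (σ.o (σ.s n) = true ∧ AtRightTurn σ'.perm (σ.s n))) →
      σ'.o = σ.o ∧ σ'.s = Function.update σ.s n n)

/-- `π` contains the vincular pattern `pat` whose marked adjacent pair starts
at (0-indexed) position `k` of `pat`. -/
def ContainsVincular (π pat : List ℕ) (k : ℕ) : Prop :=
  ∃ f : ℕ → ℕ, StrictMonoOn f (Set.Iio pat.length) ∧
    (∀ i < pat.length, f i < π.length) ∧
    f (k + 1) = f k + 1 ∧
    (∀ i < pat.length, ∀ j < pat.length,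
      (pat.getD i 0 < pat.getD j 0 ↔ π.getD (f i) 0 < π.getD (f j) 0))

/-- 2-clumped permutations: those avoiding the vincular patterns
`3(51)24`, `3(51)42`, `24(51)3` and `42(51)3`. -/
def TwoClumped (π : List ℕ) : Prop :=
  ¬ ContainsVincular π [3, 5, 1, 2, 4] 1 ∧ ¬ ContainsVincular π [3, 5, 1, 4, 2] 1 ∧
  ¬ ContainsVincular π [2, 4, 5, 1, 3] 2 ∧ ¬ ContainsVincular π [4, 2, 5, 1, 3] 2

/-- `S'_n`: the set of 2-clumped permutations in `S_n`. -/
def SClump (n : ℕ) : Set (List ℕ) := {l ∈ SymmList n | TwoClumped l}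

/-- `B_n`: the permutations obtained from `1` by repeatedly inserting the new
largest value at the first or the last position. -/
def Bset : ℕ → Set (List ℕ)
  | 0 => {[]}
  | 1 => {[1]}
  | (n + 2) => {l | ∃ π ∈ Bset (n + 1), l = cins 1 π ∨ l = cins (n + 2) π}

section MyAux

lemma my_symm_length {n : ℕ} {l : List ℕ} (h : l ∈ SymmList n) : l.length = n := by
  simpa using h.length_eq

lemma my_symm_nodup {n : ℕ} {l : List ℕ} (h : l ∈ SymmList n) : l.Nodup :=
  (List.Perm.nodup_iff h).2 (List.nodup_range' (s := 1) (n := n))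

lemma my_symm_mem_iff {n : ℕ} {l : List ℕ} (h : l ∈ SymmList n) {x : ℕ} :
    x ∈ l ↔ 1 ≤ x ∧ x ≤ n := by
  rw [h.mem_iff, List.mem_range']
  constructor
  · rintro ⟨i, hi, rfl⟩; omega
  · rintro ⟨h1, h2⟩; exact ⟨x - 1, by omega, by omega⟩

lemma my_symm_not_mem {n x : ℕ} {l : List ℕ} (h : l ∈ SymmList n) (hx : n < x) : x ∉ l := by
  rw [my_symm_mem_iff h]; omega

lemma my_range'_succ_right (n : ℕ) : List.range' 1 (n + 1) = List.range' 1 n ++ [n + 1] := by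
  have := List.range'_append (s := 1) (m := n) (n := 1) (step := 1)
  simp at this
  rw [← this, Nat.add_comm 1 n]

lemma my_pdel_symm {n : ℕ} {l : List ℕ} (h : l ∈ SymmList (n + 1)) : pdel l ∈ SymmList n := by
  have hl : l.length = n + 1 := my_symm_length h
  show List.Perm (l.erase l.length) _
  rw [hl]
  have h2 : (l.erase (n+1)).Perm ((List.range' 1 (n+1)).erase (n+1)) := h.erase _
  rw [my_range'_succ_right n] at h2
  rw [List.erase_append_right _ (my_symm_not_mem (by exact List.Perm.refl _) (by omega))] at h2
  simpa using h2

lemma my_length_cins (i : ℕ) (l : List ℕ) : (cins i l).length = l.length + 1 := by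
  simp [cins]; omega

lemma my_pdel_cins {n : ℕ} {l : List ℕ} (h : l ∈ SymmList n) (i : ℕ) : pdel (cins i l) = l := by
  have hl : l.length = n := my_symm_length h
  have hnm : (l.length + 1) ∉ l.take (i-1) := fun hmem =>
    my_symm_not_mem h (by omega) (List.take_subset _ _ hmem)
  show (cins i l).erase (cins i l).length = l
  rw [my_length_cins]
  unfold cins
  rw [List.erase_append_right _ hnm, List.erase_cons_head, List.take_append_drop]

lemma my_zig_subset {n : ℕ} {L : Set (List ℕ)} (h : IsZigzag n L) : L ⊆ SymmList n := by
  cases h with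
  | zero => rintro x rfl; exact List.Perm.refl _
  | succ n L hsub _ _ => exact hsub

lemma my_zig_pdel {n : ℕ} {L : Set (List ℕ)} (h : IsZigzag (n + 1) L) :
    IsZigzag n (pdel '' L) := by
  cases h with
  | succ n L hsub hz _ => exact hz

lemma my_mem_cSeq {L : Set (List ℕ)} {N : ℕ} {l x : List ℕ} (h : x ∈ cSeq L N l) :
    x ∈ L ∧ ∃ i, 1 ≤ i ∧ i ≤ N ∧ x = cins i l := by
  unfold cSeq at h
  rw [List.mem_filter] at h
  obtain ⟨hmem, hdec⟩ := h
  rw [List.mem_map] at hmem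
  obtain ⟨i, hi, rfl⟩ := hmem
  rw [List.mem_range'] at hi
  obtain ⟨k, hk, rfl⟩ := hi
  refine ⟨by simpa using hdec, 1 + 1 * k, by omega, by omega, rfl⟩

lemma my_cins_ne {n : ℕ} {l : List ℕ} (h : l ∈ SymmList n) {i i' : ℕ}
    (hi : 1 ≤ i) (hi' : i' ≤ n + 1) (hlt : i < i') : cins i l ≠ cins i' l := by
  have hl : l.length = n := my_symm_length h
  intro heq
  have hmin : (l.take (i-1)).length = i - 1 := by
    rw [List.length_take]; omega
  have h1 : (cins i l)[i - 1]? = some (l.length + 1) := by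
    unfold cins
    rw [List.getElem?_append_right (le_of_eq hmin), hmin, Nat.sub_self]
    simp
  have h2 : (cins i' l)[i - 1]? = some (l[i-1]'(by omega)) := by
    unfold cins
    rw [List.getElem?_append_left (by rw [List.length_take]; omega)]
    rw [List.getElem?_take, if_pos (by omega)]
    exact List.getElem?_eq_getElem (by omega)
  rw [heq, h2] at h1
  have hmem : l[i-1]'(by omega) ∈ l := List.getElem_mem _
  have hle := (my_symm_mem_iff h).1 hmem
  rw [Option.some_inj] at h1
  omega

end MyAux

section MyAux2

lemma my_cSeq_nodup {L : Set (List ℕ)} {n : ℕ} {l : List ℕ} (h : l ∈ SymmList n) :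
    (cSeq L (n + 1) l).Nodup := by
  unfold cSeq
  apply List.Nodup.filter
  apply List.Nodup.map_on
  · intro i hi i' hi' heq
    rw [List.mem_range'] at hi hi'
    obtain ⟨a, ha, rfl⟩ := hi
    obtain ⟨b, hb, rfl⟩ := hi'
    rcases Nat.lt_trichotomy (1 + 1 * a) (1 + 1 * b) with hc | hc | hc
    · exact absurd heq (my_cins_ne h (by omega) (by omega) hc)
    · exact hc
    · exact absurd heq.symm (my_cins_ne h (by omega) (by omega) hc)
  · exact List.nodup_range' (s := 1) (n := n + 1)

lemma my_mem_Jseq_mem {n : ℕ} {L : Set (List ℕ)} {x : List ℕ}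
    (h : IsZigzag n L) (hx : x ∈ Jseq n L) : x ∈ L := by
  cases n with
  | zero =>
    cases h with
    | zero => simp [Jseq] at hx; simp [hx]
  | succ n =>
    rw [Jseq, List.mem_flatten] at hx
    obtain ⟨b, hb, hxb⟩ := hx
    rw [List.mem_mapIdx] at hb
    obtain ⟨i, hi, rfl⟩ := hb
    split at hxb
    · rw [List.mem_reverse] at hxb
      exact (my_mem_cSeq hxb).1
    · exact (my_mem_cSeq hxb).1

lemma my_mem_Jseq_symm {n : ℕ} {L : Set (List ℕ)} {x : List ℕ}
    (h : IsZigzag n L) (hx : x ∈ Jseq n L) : x ∈ SymmList n :=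
  my_zig_subset h (my_mem_Jseq_mem h hx)

lemma my_pdel_of_mem_block {L : Set (List ℕ)} {n : ℕ} {p x : List ℕ} (hp : p ∈ SymmList n)
    {m : ℕ}
    (hx : x ∈ (if m % 2 = 0 then (cSeq L (n + 1) p).reverse else cSeq L (n + 1) p)) :
    pdel x = p := by
  split at hx
  · rw [List.mem_reverse] at hx
    obtain ⟨-, i, -, -, rfl⟩ := my_mem_cSeq hx
    exact my_pdel_cins hp i
  · obtain ⟨-, i, -, -, rfl⟩ := my_mem_cSeq hx
    exact my_pdel_cins hp i

lemma my_Jseq_nodup {n : ℕ} {L : Set (List ℕ)} (h : IsZigzag n L) : (Jseq n L).Nodup := by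
  induction h with
  | zero => simp [Jseq]
  | succ n L hsub hz hcl ih =>
    rw [Jseq, List.nodup_flatten]
    have hparent : ∀ m (hm : m < (Jseq n (pdel '' L)).length),
        (Jseq n (pdel '' L))[m] ∈ SymmList n := fun m hm =>
      my_mem_Jseq_symm hz (List.getElem_mem hm)
    constructor
    · intro b hb
      rw [List.mem_mapIdx] at hb
      obtain ⟨i, hi, rfl⟩ := hb
      split
      · exact (List.nodup_reverse).2 (my_cSeq_nodup (hparent i hi))
      · exact my_cSeq_nodup (hparent i hi)
    · rw [List.pairwise_iff_getElem]
      intro a b ha hb hab x hxa hxb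
      rw [List.getElem_mapIdx] at hxa hxb
      have ha' : a < (Jseq n (pdel '' L)).length := by
        simpa using ha
      have hb' : b < (Jseq n (pdel '' L)).length := by
        simpa using hb
      have e1 : pdel x = (Jseq n (pdel '' L))[a] := my_pdel_of_mem_block (hparent a ha') hxa
      have e2 : pdel x = (Jseq n (pdel '' L))[b] := my_pdel_of_mem_block (hparent b hb') hxb
      have : a = b := (ih.getElem_inj_iff).1 (e1.symm.trans e2)
      omega

lemma my_flat_last {α : Type*} (bs : List (List α)) (k : ℕ) (ρ σ : α)
    (h1 : bs.flatten[k]? = some ρ) (h2 : bs.flatten[k + 1]? = some σ)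
    (hd : ∀ b ∈ bs, ρ ∈ b → σ ∉ b) :
    ∃ b ∈ bs, ρ ∈ b ∧ b.getLast? = some ρ := by
  induction bs generalizing k with
  | nil => simp at h1
  | cons b bs ih =>
    rw [List.flatten_cons] at h1 h2
    by_cases hk2 : k < b.length
    · have hρ : b[k]? = some ρ := by rw [← List.getElem?_append_left hk2]; exact h1
      have hρm : ρ ∈ b := List.mem_of_getElem? hρ
      by_cases hk1 : k + 1 < b.length
      · have hσ : b[k+1]? = some σ := by rw [← List.getElem?_append_left hk1]; exact h2
        exact absurd (List.mem_of_getElem? hσ) (hd b (List.mem_cons_self) hρm)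
      · refine ⟨b, List.mem_cons_self, hρm, ?_⟩
        rw [List.getLast?_eq_getElem?]
        have : b.length - 1 = k := by omega
        rw [this]; exact hρ
    · push_neg at hk2
      rw [List.getElem?_append_right hk2] at h1
      rw [List.getElem?_append_right (by omega)] at h2
      have : k + 1 - b.length = k - b.length + 1 := by omega
      rw [this] at h2
      obtain ⟨c, hc, hm, hl⟩ := ih (k - b.length) h1 h2
        (fun c hc => hd c (List.mem_cons_of_mem _ hc))
      exact ⟨c, List.mem_cons_of_mem _ hc, hm, hl⟩

end MyAux2

section MyAux3

lemma my_indexOf_getElem {α : Type*} [BEq α] [LawfulBEq α] {l : List α} (H : l.Nodup)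
    (m : ℕ) (hm : m < l.length) : l.idxOf l[m] = m := by
  induction l generalizing m with
  | nil => simp at hm
  | cons a t ih =>
    rw [List.nodup_cons] at H
    cases m with
    | zero =>
      show List.idxOf (a :: t)[0] (a :: t) = 0
      rw [List.getElem_cons_zero, List.idxOf_cons, beq_self_eq_true]
      rfl
    | succ m =>
      have hm' : m < t.length := by simpa using hm
      have hmem : t[m] ∈ t := List.getElem_mem hm'
      have hne : a ≠ t[m] := fun h => H.1 (h ▸ hmem)
      show List.idxOf (a :: t)[m+1] (a :: t) = m + 1
      rw [List.getElem_cons_succ]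
      rw [List.idxOf_cons, beq_false_of_ne hne]
      show List.idxOf t[m] t + 1 = m + 1
      rw [ih H.2 m hm']

lemma my_key {n : ℕ} {L : Set (List ℕ)} (h : IsZigzag (n + 1) L) {k : ℕ} {ρ σ : List ℕ}
    (hρ : (Jseq (n + 1) L)[k]? = some ρ) (hσ : (Jseq (n + 1) L)[k + 1]? = some σ)
    (hne : pdel σ ≠ pdel ρ) :
    (if ((Jseq n (pdel '' L)).idxOf (pdel ρ)) % 2 = 0
     then (cSeq L (n + 1) (pdel ρ)).reverse
     else cSeq L (n + 1) (pdel ρ)).getLast? = some ρ := by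
  have hz : IsZigzag n (pdel '' L) := my_zig_pdel h
  have hparent : ∀ m (hm : m < (Jseq n (pdel '' L)).length),
      (Jseq n (pdel '' L))[m] ∈ SymmList n := fun m hm =>
    my_mem_Jseq_symm hz (List.getElem_mem hm)
  rw [Jseq] at hρ hσ
  obtain ⟨b, hb, hρb, hlast⟩ := my_flat_last _ k ρ σ hρ hσ (by
    intro b hb hρb hσb
    rw [List.mem_mapIdx] at hb
    obtain ⟨i, hi, rfl⟩ := hb
    have e1 := my_pdel_of_mem_block (hparent i hi) hρb
    have e2 := my_pdel_of_mem_block (hparent i hi) hσb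
    exact hne (e2.trans e1.symm))
  rw [List.mem_mapIdx] at hb
  obtain ⟨m, hm, rfl⟩ := hb
  have hpd : pdel ρ = (Jseq n (pdel '' L))[m] := my_pdel_of_mem_block (hparent m hm) hρb
  have hidx : (Jseq n (pdel '' L)).idxOf (pdel ρ) = m := by
    rw [hpd]
    exact my_indexOf_getElem (my_Jseq_nodup hz) m hm
  rw [hidx, hpd]
  exact hlast

lemma my_jump_ne {A B C : List ℕ} {v : ℕ} (hB : B ≠ []) (hlt : ∀ x ∈ B, x < v) :
    A ++ v :: (B ++ C) ≠ A ++ (B ++ v :: C) := by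
  intro h
  have h' := List.append_cancel_left h
  cases B with
  | nil => exact hB rfl
  | cons b B' =>
    simp only [List.cons_append, List.cons.injEq] at h'
    have := hlt b (List.mem_cons_self)
    omega

lemma my_jump_erase {A B C : List ℕ} {v w : ℕ} (hw : w ≠ v) (hwB : w ∉ B) :
    ∃ A' C', (A ++ v :: (B ++ C)).erase w = A' ++ v :: (B ++ C') ∧
             (A ++ (B ++ v :: C)).erase w = A' ++ (B ++ v :: C') := by
  by_cases hA : w ∈ A
  · exact ⟨A.erase w, C, by rw [List.erase_append_left _ hA],
      by rw [List.erase_append_left _ hA]⟩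
  · refine ⟨A, C.erase w, ?_, ?_⟩
    · rw [List.erase_append_right _ hA, List.erase_cons_tail (by simpa using (Ne.symm hw)),
        List.erase_append_right _ hwB]
    · rw [List.erase_append_right _ hA, List.erase_append_right _ hwB,
        List.erase_cons_tail (by simpa using (Ne.symm hw))]

lemma my_rj_top {N : ℕ} {α β : List ℕ} {d : ℕ} (hα : α ∈ SymmList N)
    (h : RightJump α β N d) : pdel α = pdel β ∧ α ≠ β := by
  obtain ⟨hd, A, B, C, hBl, hBlt, rfl, rfl⟩ := h
  have hB : B ≠ [] := by intro h; subst h; simp at hBl; omega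
  have hNB : N ∉ B := fun hm => absurd (hBlt N hm) (lt_irrefl N)
  have hlen1 : (A ++ N :: (B ++ C)).length = N := my_symm_length hα
  have hlen2 : (A ++ (B ++ N :: C)).length = N := by
    simp at hlen1 ⊢; omega
  have hnd : (A ++ N :: (B ++ C)).Nodup := my_symm_nodup hα
  have hNA : N ∉ A := by
    rw [List.nodup_append] at hnd
    exact fun hm => hnd.2.2 N hm N List.mem_cons_self rfl
  constructor
  · show (A ++ N :: (B ++ C)).erase (A ++ N :: (B ++ C)).length
      = (A ++ (B ++ N :: C)).erase (A ++ (B ++ N :: C)).length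
    rw [hlen1, hlen2, List.erase_append_right _ hNA, List.erase_append_right _ hNA,
      List.erase_cons_head, List.erase_append_right _ hNB, List.erase_cons_head]
  · exact my_jump_ne hB hBlt

lemma my_rj_low {N j : ℕ} {α β : List ℕ} (hαN : α.length = N) (hβN : β.length = N)
    (hj : j < N) {d : ℕ} (h : RightJump α β j d) : pdel α ≠ pdel β := by
  obtain ⟨hd, A, B, C, hBl, hBlt, rfl, rfl⟩ := h
  have hB : B ≠ [] := by intro h; subst h; simp at hBl; omega
  have hNB : N ∉ B := fun hm => by have := hBlt N hm; omega
  obtain ⟨A', C', e1, e2⟩ := my_jump_erase (v := j) (w := N) (by omega) hNB (A := A) (C := C)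
  show (A ++ j :: (B ++ C)).erase (A ++ j :: (B ++ C)).length
      ≠ (A ++ (B ++ j :: C)).erase (A ++ (B ++ j :: C)).length
  rw [hαN, hβN, e1, e2]
  exact my_jump_ne hB hBlt

lemma my_two_le {N : ℕ} {α β : List ℕ} {d : ℕ} (hα : α ∈ SymmList N)
    (h : RightJump α β N d) : 2 ≤ N := by
  obtain ⟨hd, A, B, C, hBl, hBlt, rfl, rfl⟩ := h
  cases B with
  | nil => simp at hBl; omega
  | cons b B' =>
    have hb : b ∈ A ++ N :: (b :: B' ++ C) := by simp
    have := (my_symm_mem_iff hα).1 hb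
    have := hBlt b (List.mem_cons_self)
    omega

end MyAux3

/-- Let `L_n ⊆ S_n` be a zigzag language and let `π, ρ, σ` be
three consecutive permutations in `J(L_n)`. If `ρ` is obtained from `π` by a
jump of the value `n` and `σ` is obtained from `ρ` by a jump of a value
`j < n`, then `s_{n,i}^ρ = s_{n,i}^π` for all `i ∈ {1,…,n−2}` and
`s_{n,n−1}^ρ = n−1`. -/
theorem sVec_update_nj (n : ℕ) (L : Set (List ℕ)) (hL : IsZigzag n L)
    (k : ℕ) (π ρ σ : List ℕ)
    (hπ : (Jseq n L)[k]? = some π) (hρ : (Jseq n L)[k + 1]? = some ρ)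
    (hσ : (Jseq n L)[k + 2]? = some σ)
    (h1 : ∃ d, LeftJump π ρ n d ∨ RightJump π ρ n d)
    (j : ℕ) (hj : j < n)
    (h2 : ∃ d, LeftJump ρ σ j d ∨ RightJump ρ σ j d) :
    (∀ i, 1 ≤ i → i ≤ n - 2 → sVec n L ρ i = sVec n L π i) ∧
    sVec n L ρ (n - 1) = n - 1 := by
  have hπm : π ∈ SymmList n := my_mem_Jseq_symm hL (List.mem_of_getElem? hπ)
  have hρm : ρ ∈ SymmList n := my_mem_Jseq_symm hL (List.mem_of_getElem? hρ)
  have hσm : σ ∈ SymmList n := my_mem_Jseq_symm hL (List.mem_of_getElem? hσ)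
  obtain ⟨d1, hd1⟩ := h1
  have hn2 : 2 ≤ n := by
    cases hd1 with
    | inl h => exact my_two_le hρm h
    | inr h => exact my_two_le hπm h
  have hppair : pdel π = pdel ρ ∧ π ≠ ρ := by
    cases hd1 with
    | inl h =>
      have h' := my_rj_top hρm h
      exact ⟨h'.1.symm, fun e => h'.2 e.symm⟩
    | inr h => exact my_rj_top hπm h
  obtain ⟨hpp, hπρ⟩ := hppair
  obtain ⟨d2, hd2⟩ := h2
  have hps : pdel σ ≠ pdel ρ := by
    cases hd2 with
    | inl h => exact my_rj_low (my_symm_length hσm) (my_symm_length hρm) hj h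
    | inr h =>
      exact (my_rj_low (my_symm_length hρm) (my_symm_length hσm) hj h).symm
  obtain ⟨m, rfl⟩ : ∃ m, n = m + 2 := ⟨n - 2, by omega⟩
  have hkey := my_key (n := m + 1) hL hρ hσ hps
  have e1 : ∀ i, sVec (m + 2) L ρ i =
      if i ≤ m then sVec (m + 1) (pdel '' L) (pdel ρ) i
      else if i = m + 1 then m + 1
      else if i = m + 2 then sVec (m + 1) (pdel '' L) (pdel ρ) (m + 1) else 0 := by
    intro i
    simp only [sVec]
    rw [if_pos hkey]
  have e2 : ∀ i, sVec (m + 2) L π i =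
      if i ≤ m + 1 then sVec (m + 1) (pdel '' L) (pdel ρ) i
      else if i = m + 2 then m + 2 else 0 := by
    intro i
    simp only [sVec, hpp]
    rw [if_neg (fun hc => hπρ (Option.some_inj.1 (hkey ▸ hc)).symm)]
  constructor
  · intro i hi1 hi2
    have hi2' : i ≤ m := by omega
    rw [e1 i, e2 i, if_pos hi2', if_pos (by omega)]
  · have : m + 2 - 1 = m + 1 := by omega
    rw [this, e1 (m + 1), if_neg (by omega), if_pos rfl]
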